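/- Let V_tar be a finite nonempty set of targets, and consider the directed graph with node set V = {s, s'} ∪ V_tar and edge set E consisting of all edges from s to each target, all edges between every ordered pair of distinct targets, and all edges from each target to s'. Suppose y : E → {0, 1} satisfies the flow constraints (Σ_{e ∈ E_out(s)} y_e = 1, Σ_{e ∈ E_in(s')} y_e = 1, Σ_{e ∈ E_in(i)} y_e = 1 and Σ_{e ∈ E_in(i)} y_e = Σ_{e ∈ E_out(i)} y_e for every target i), and suppose there exists a function t : V → ℝ such that t_i < t_j for every edge e = (i, j) with y_e = 1. Then the support {e ∈ E : y_e = 1} is exactly the edge set of a directed Hamiltonian path from s to s' that visits every target in V_tar exactly once. -/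

import Mathlib

/-- Nodes of the MT-TSP graph: the depot `s`, its copy `s'`, and the targets. -/
inductive Node (α : Type) where
  | s : Node α
  | s' : Node α
  | tar : α → Node α
  deriving DecidableEq, Fintype

/-- The edge set `E` of the MT-TSP graph: all edges from `s` to each target, between
every ordered pair of distinct targets, and from each target to `s'`. -/
def isEdge {α : Type} [DecidableEq α] : Node α × Node α → Bool
  | (Node.s, Node.tar _) => true
  | (Node.tar a, Node.tar b) => a != b
  | (Node.tar _, Node.s') => true
  | _ => false

/-- The edge set as a finset. -/
def Efin (α : Type) [Fintype α] [DecidableEq α] : Finset (Node α × Node α) :=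
  Finset.univ.filter (fun e => isEdge e = true)

/-- Edges of `E` entering node `i`. -/
def Ein {α : Type} [Fintype α] [DecidableEq α] (i : Node α) : Finset (Node α × Node α) :=
  (Efin α).filter (fun e => e.2 = i)

/-- Edges of `E` leaving node `i`. -/
def Eout {α : Type} [Fintype α] [DecidableEq α] (i : Node α) : Finset (Node α × Node α) :=
  (Efin α).filter (fun e => e.1 = i)

/-- The edge set of a directed path visiting the entries of `L` in order. -/
def listEdges {β : Type} (L : List β) : Set (β × β) := {p | p ∈ L.zip L.tail}

lemma sum_one_exists_unique {β : Type*} [DecidableEq β] {S : Finset β} {y : β → ℝ}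
    (h01 : ∀ e, y e = 0 ∨ y e = 1) (hs : ∑ e ∈ S, y e = 1) :
    ∃! e, e ∈ S ∧ y e = 1 := by
  classical
  have h1 : ∑ e ∈ S, y e = ((S.filter (fun e => y e = 1)).card : ℝ) := by
    rw [← Finset.sum_boole]
    refine Finset.sum_congr rfl (fun e _ => ?_)
    rcases h01 e with h | h <;> simp [h]
  have hc : (S.filter (fun e => y e = 1)).card = 1 := by
    have : ((S.filter (fun e => y e = 1)).card : ℝ) = 1 := by rw [← h1, hs]
    exact_mod_cast this
  obtain ⟨e, he⟩ := Finset.card_eq_one.mp hc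
  have heS : e ∈ S.filter (fun e => y e = 1) := he ▸ Finset.mem_singleton_self e
  obtain ⟨he1, he2⟩ := Finset.mem_filter.mp heS
  refine ⟨e, ⟨he1, he2⟩, ?_⟩
  intro e' he'
  have : e' ∈ S.filter (fun e => y e = 1) := Finset.mem_filter.mpr ⟨he'.1, he'.2⟩
  rw [he] at this
  exact Finset.mem_singleton.mp this

lemma mem_zip_tail {β : Type*} (L : List β) (p : β × β) :
    p ∈ L.zip L.tail ↔ ∃ i, L[i]? = some p.1 ∧ L[i+1]? = some p.2 := by
  induction L with
  | nil => simp
  | cons a M ih =>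
    cases M with
    | nil =>
      simp only [List.tail_cons, List.zip_nil_right, List.not_mem_nil, false_iff]
      rintro ⟨i, h1, h2⟩
      simp at h2
    | cons b M' =>
      constructor
      · intro hp
        rcases List.mem_cons.mp hp with h | h
        · exact ⟨0, by simp [h], by simp [h]⟩
        · obtain ⟨i, h1, h2⟩ := ih.mp h
          exact ⟨i+1, by simpa using h1, by simpa using h2⟩
      · rintro ⟨i, h1, h2⟩
        cases i with
        | zero =>
          simp only [List.getElem?_cons_zero, Option.some.injEq,
            List.getElem?_cons_succ] at h1 h2
          have hp : p = (a, b) := Prod.ext h1.symm h2.symm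
          simp [hp, List.zip_cons_cons]
        | succ j =>
          right
          exact ih.mpr ⟨j, by simpa using h1, by simpa using h2⟩

/-- If `y : E → {0, 1}` satisfies the MT-TSP flow constraints and there is
a function `t : V → ℝ` with `t i < t j` for every edge `(i, j)` with `y = 1`, then the
support `{e : y e = 1}` is exactly the edge set of a directed Hamiltonian path from `s`
to `s'` visiting every target exactly once. -/
theorem stmt_9 {α : Type} [Fintype α] [DecidableEq α] [Nonempty α]
    (y : Node α × Node α → ℝ)
    (hbin : ∀ e, y e = 0 ∨ y e = 1)
    (hsupp : ∀ e, e ∉ Efin α → y e = 0)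
    (hflow_s : ∑ e ∈ Eout (Node.s : Node α), y e = 1)
    (hflow_s' : ∑ e ∈ Ein (Node.s' : Node α), y e = 1)
    (hflow_in : ∀ a : α, ∑ e ∈ Ein (Node.tar a), y e = 1)
    (hflow_cons : ∀ a : α, ∑ e ∈ Ein (Node.tar a), y e = ∑ e ∈ Eout (Node.tar a), y e)
    (t : Node α → ℝ)
    (ht : ∀ e : Node α × Node α, y e = 1 → t e.1 < t e.2) :
    ∃ P : List α, P.Nodup ∧ (∀ a : α, a ∈ P) ∧
      {e : Node α × Node α | y e = 1} =
        listEdges (Node.s :: (P.map Node.tar ++ [Node.s'])) := by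
  classical
  have hmemE : ∀ e : Node α × Node α, e ∈ Efin α ↔ isEdge e = true := by
    intro e; simp [Efin]
  have hEdge1 : ∀ e : Node α × Node α, y e = 1 → isEdge e = true := by
    intro e he
    by_contra h
    have h0 := hsupp e (by simp [hmemE, h])
    rw [h0] at he; norm_num at he
  have hshape : ∀ i j : Node α, isEdge (i, j) = true →
      (i = Node.s ∨ ∃ a, i = Node.tar a) ∧ (j = Node.s' ∨ ∃ b, j = Node.tar b) := by
    intro i j h
    cases i <;> cases j <;> simp [isEdge] at h ⊢
  -- uniqueness of outgoing edge
  have hout : ∀ i : Node α, (∑ e ∈ Eout i, y e = 1) → ∃! j, y (i, j) = 1 := by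
    intro i hsum
    obtain ⟨e, ⟨heS, he1⟩, huniq⟩ := sum_one_exists_unique hbin hsum
    have hfst : e.1 = i := by
      have := Finset.mem_filter.mp heS; exact this.2
    refine ⟨e.2, ?_, ?_⟩
    · rw [← hfst]; simpa using he1
    · intro j hj
      have hmem : (i, j) ∈ Eout i := by
        refine Finset.mem_filter.mpr ⟨(hmemE _).mpr (hEdge1 _ hj), rfl⟩
      have := huniq (i, j) ⟨hmem, hj⟩
      rw [← this]
  have hin : ∀ j : Node α, (∑ e ∈ Ein j, y e = 1) → ∃! i, y (i, j) = 1 := by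
    intro j hsum
    obtain ⟨e, ⟨heS, he1⟩, huniq⟩ := sum_one_exists_unique hbin hsum
    have hsnd : e.2 = j := by
      have := Finset.mem_filter.mp heS; exact this.2
    refine ⟨e.1, ?_, ?_⟩
    · rw [← hsnd]; simpa using he1
    · intro i hi
      have hmem : (i, j) ∈ Ein j := by
        refine Finset.mem_filter.mpr ⟨(hmemE _).mpr (hEdge1 _ hi), rfl⟩
      have := huniq (i, j) ⟨hmem, hi⟩
      rw [← this]
  have hFex_s : ∃! j, y (Node.s, j) = 1 := hout Node.s hflow_s
  have hFex_tar : ∀ a, ∃! j, y (Node.tar a, j) = 1 :=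
    fun a => hout _ ((hflow_cons a) ▸ hflow_in a)
  have hGex_tar : ∀ a, ∃! i, y (i, Node.tar a) = 1 := fun a => hin _ (hflow_in a)
  -- the successor function
  set F : Node α → Node α :=
    fun i => if h : ∃ j, y (i, j) = 1 then h.choose else Node.s' with hFdef
  have hF1 : ∀ i : Node α, (∃ j, y (i, j) = 1) → y (i, F i) = 1 := by
    intro i h
    rw [hFdef]; simp only [dif_pos h]; exact h.choose_spec
  have hFu : ∀ i j, y (i, j) = 1 → F i = j := by
    intro i j hij
    have h1 := hF1 i ⟨j, hij⟩
    rcases (hshape i j (hEdge1 _ hij)).1 with hi | ⟨a, hi⟩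
    · subst hi; exact hFex_s.unique h1 hij
    · subst hi; exact (hFex_tar a).unique h1 hij
  have hFs' : F Node.s' = Node.s' := by
    have hno : ¬ ∃ j, y (Node.s', j) = 1 := by
      rintro ⟨j, hj⟩
      have := hEdge1 _ hj
      cases j <;> simp [isEdge] at this
    rw [hFdef]; simp only [dif_neg hno]
  have hnext : ∀ x : Node α, x ≠ Node.s' → y (x, F x) = 1 := by
    intro x hx
    cases x with
    | s => exact hF1 _ hFex_s.exists
    | s' => exact absurd rfl hx
    | tar a => exact hF1 _ (hFex_tar a).exists
  -- the iterate sequence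
  set u : ℕ → Node α := fun n => F^[n] Node.s with hudef
  have hu0 : u 0 = Node.s := rfl
  have husucc : ∀ n, u (n+1) = F (u n) := by
    intro n; rw [hudef]; exact Function.iterate_succ_apply' F n Node.s
  -- termination
  have hterm : ∃ n, u n = Node.s' := by
    by_contra h
    push_neg at h
    have hmono : StrictMono (fun n => t (u n)) := by
      apply strictMono_nat_of_lt_succ
      intro n
      have := ht (u n, u (n+1)) (by rw [husucc]; exact hnext _ (h n))
      exact this
    have hinj : Function.Injective u := by
      intro m n hmn
      exact hmono.injective (by simp [hmn])
    obtain ⟨m, n, hne, heq⟩ := Finite.exists_ne_map_eq_of_infinite u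
    exact hne (hinj heq)
  set N := Nat.find hterm with hNdef
  have hN : u N = Node.s' := Nat.find_spec hterm
  have hNlt : ∀ n < N, u n ≠ Node.s' := fun n hn => Nat.find_min hterm hn
  have hN0 : 0 < N := by
    rcases Nat.eq_zero_or_pos N with h | h
    · exfalso; rw [h] at hN; exact absurd (hu0.symm.trans hN) (by simp)
    · exact h
  have hstop : ∀ n, N ≤ n → u n = Node.s' := by
    intro n
    induction n with
    | zero => intro hn; rw [Nat.le_zero.mp hn] at hN; exact hN
    | succ m ih =>
      intro hn
      rcases Nat.lt_or_ge m N with h | h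
      · have : N = m + 1 := by omega
        rw [← this]; exact hN
      · rw [husucc, ih h, hFs']
  have hmlt : ∀ n, u n ≠ Node.s' → n < N := by
    intro n hn
    by_contra h
    push_neg at h
    exact hn (hstop n h)
  -- monotonicity of t along the path
  have hmono : ∀ n, n ≤ N → ∀ m, m < n → t (u m) < t (u n) := by
    intro n
    induction n with
    | zero => intro _ m hm; omega
    | succ p ihp =>
      intro hn m hm
      have hp : t (u p) < t (u (p+1)) := by
        have := ht (u p, u (p+1)) (by rw [husucc]; exact hnext _ (hNlt p (by omega)))
        exact this
      rcases Nat.lt_or_ge m p with h | h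
      · exact (ihp (by omega) m h).trans hp
      · have : m = p := by omega
        rw [this]; exact hp
  have huinj : ∀ m, m ≤ N → ∀ n, n ≤ N → u m = u n → m = n := by
    intro m hm n hn hmn
    rcases lt_trichotomy m n with h | h | h
    · have := hmono n hn m h; rw [hmn] at this; exact absurd this (lt_irrefl _)
    · exact h
    · have := hmono m hm n h; rw [hmn] at this; exact absurd this (lt_irrefl _)
  -- backward reachability
  have key : ∀ k : ℕ, ∀ x : Node α,
      (Finset.univ.filter (fun z => t z < t x)).card = k →
      (x = Node.s ∨ ∃ a, x = Node.tar a) → ∃ m, m < N ∧ u m = x := by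
    intro k
    induction k using Nat.strong_induction_on with
    | _ k ih =>
      intro x hk hx
      rcases hx with rfl | ⟨a, rfl⟩
      · exact ⟨0, hN0, rfl⟩
      · obtain ⟨i, hi1, _⟩ := hGex_tar a
        have hedge := hEdge1 _ hi1
        have hi_shape := (hshape i (Node.tar a) hedge).1
        have hti : t i < t (Node.tar a) := ht _ hi1
        have hcard : (Finset.univ.filter (fun z => t z < t i)).card < k := by
          rw [← hk]
          apply Finset.card_lt_card
          constructor
          · intro z hz
            simp only [Finset.mem_filter, Finset.mem_univ, true_and] at hz ⊢
            exact hz.trans hti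
          · intro hsub
            have : i ∈ Finset.univ.filter (fun z => t z < t (Node.tar a)) := by
              simp [hti]
            have := hsub this
            simp at this
        obtain ⟨m, hm, hum⟩ := ih _ hcard i rfl hi_shape
        have hunext : u (m+1) = Node.tar a := by
          rw [husucc, hum]; exact hFu _ _ hi1
        have hm1 : m + 1 < N := by
          apply hmlt
          rw [hunext]
          exact fun h => by cases h
        exact ⟨m+1, hm1, hunext⟩
  have hreach : ∀ x : Node α, (x = Node.s ∨ ∃ a, x = Node.tar a) →
      ∃ m, m < N ∧ u m = x := fun x hx => key _ x rfl hx
  -- targets along the path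
  set τ : Node α → α := fun x => match x with
    | Node.tar a => a
    | _ => Classical.arbitrary α with hτdef
  have hτ : ∀ n, 0 < n → n < N → Node.tar (τ (u n)) = u n := by
    intro n hn0 hnN
    obtain ⟨m, rfl⟩ : ∃ m, n = m + 1 := ⟨n - 1, by omega⟩
    have h1 : y (u m, u (m+1)) = 1 := by
      rw [husucc]; exact hnext _ (hNlt m (by omega))
    rcases (hshape _ _ (hEdge1 _ h1)).2 with h | ⟨b, hb⟩
    · exact absurd h (hNlt _ hnN)
    · rw [hb]
  set k := N - 1 with hkdef
  have hNk : N = k + 1 := by omega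
  set P : List α := (List.range k).map (fun i => τ (u (i+1))) with hPdef
  -- the full list equals map u (range (N+1))
  have hL : (Node.s :: (P.map Node.tar ++ [Node.s']) : List (Node α))
      = (List.range (N+1)).map u := by
    rw [List.range_succ, List.map_append]
    rw [show List.map u [N] = [Node.s'] from by simp [hN]]
    rw [hNk, List.range_succ_eq_map, List.map_cons, List.map_map, List.map_map]
    congr 1
    simp only [List.append_eq]
    congr 1
    apply List.map_congr_left
    intro i hi
    have hik : i < k := List.mem_range.mp hi
    show Node.tar (τ (u (i+1))) = u (i+1)
    exact hτ (i+1) (by omega) (by omega)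
  refine ⟨P, ?_, ?_, ?_⟩
  · -- Nodup
    rw [hPdef]
    apply List.Nodup.map_on
    · intro i hi j hj hij
      have hik : i < k := List.mem_range.mp hi
      have hjk : j < k := List.mem_range.mp hj
      have h1 : Node.tar (τ (u (i+1))) = Node.tar (τ (u (j+1))) := by rw [hij]
      rw [hτ (i+1) (by omega) (by omega), hτ (j+1) (by omega) (by omega)] at h1
      have := huinj (i+1) (by omega) (j+1) (by omega) h1
      omega
    · exact List.nodup_range
  · -- completeness
    intro a
    obtain ⟨m, hm, hum⟩ := hreach (Node.tar a) (Or.inr ⟨a, rfl⟩)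
    have hm0 : m ≠ 0 := by
      intro h; rw [h, hu0] at hum; cases hum
    obtain ⟨i, rfl⟩ : ∃ i, m = i + 1 := ⟨m - 1, by omega⟩
    rw [hPdef]
    refine List.mem_map.mpr ⟨i, List.mem_range.mpr (by omega), ?_⟩
    rw [hum]
  · -- the edge set equality
    ext e
    simp only [Set.mem_setOf_eq, listEdges, hL]
    rw [mem_zip_tail]
    have hget : ∀ i : ℕ, i < N + 1 →
        ((List.range (N+1)).map u)[i]? = some (u i) := by
      intro i hi
      rw [List.getElem?_map, List.getElem?_range hi]
      rfl
    constructor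
    · intro he
      have hedge := hEdge1 _ he
      obtain ⟨e1, e2⟩ := e
      have hsh := (hshape e1 e2 hedge).1
      obtain ⟨m, hm, hum⟩ := hreach e1 hsh
      have he2 : u (m+1) = e2 := by
        rw [husucc, hum]; exact hFu _ _ he
      refine ⟨m, ?_, ?_⟩
      · rw [hget m (by omega)]; rw [hum]
      · rw [hget (m+1) (by omega)]; rw [he2]
    · rintro ⟨i, h1, h2⟩
      have hiN : i < N := by
        by_contra h
        push_neg at h
        rcases Nat.lt_or_ge (i+1) (N+1) with h' | h'
        · omega
        · rw [List.getElem?_eq_none (by simpa using h')] at h2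
          cases h2
      rw [hget i (by omega)] at h1
      rw [hget (i+1) (by omega)] at h2
      have he : e = (u i, u (i+1)) := by
        obtain ⟨e1, e2⟩ := e
        simp only [Option.some.injEq] at h1 h2
        rw [h1, h2]
      rw [he, husucc]
      exact hnext _ (hNlt i hiN)
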